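/- Let N ≥ 1, y ∈ {−1,1}^N, K a symmetric positive semidefinite N×N matrix, C > 0, λ ∈ ℝ. Define f(α) = (1/2)Σᵢⱼ yᵢyⱼαᵢαⱼKᵢⱼ + CΣᵢG(αᵢ/C) − λΣᵢαᵢ where G(δ) = δ log δ + (1−δ) log(1−δ) extended by G(0)=G(1)=0. Then for any minimizer α* of f over the feasible set {α ∈ [0,C]^N : Σᵢ αᵢyᵢ = 0} containing a point in the open box (0,C)^N with Σᵢαᵢyᵢ=0, every component of α* satisfies 0 < αᵢ* < C. -/

import Mathlib

noncomputable def Gfun (x : ℝ) : ℝ := x * Real.log x + (1 - x) * Real.log (1 - x)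

lemma Gfun_zero : Gfun 0 = 0 := by simp [Gfun]

lemma Gfun_one : Gfun 1 = 0 := by simp [Gfun]

lemma Gfun_symm (x : ℝ) : Gfun (1 - x) = Gfun x := by
  simp only [Gfun, sub_sub_cancel]; ring

lemma Gfun_le {x : ℝ} (hx : x ∈ Set.Icc (0:ℝ) 1) : Gfun x ≤ x * Real.log x := by
  obtain ⟨h0, h1⟩ := hx
  have a2 : (1 - x) * Real.log (1 - x) ≤ 0 :=
    mul_nonpos_of_nonneg_of_nonpos (by linarith) (Real.log_nonpos (by linarith) (by linarith))
  simp only [Gfun]; linarith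

lemma Gfun_combo {a b t : ℝ} (ha : a ∈ Set.Icc (0:ℝ) 1) (hb : b ∈ Set.Icc (0:ℝ) 1)
    (ht : t ∈ Set.Icc (0:ℝ) 1) :
    Gfun ((1 - t) * a + t * b) ≤ (1 - t) * Gfun a + t * Gfun b := by
  obtain ⟨ha0, ha1⟩ := ha
  obtain ⟨hb0, hb1⟩ := hb
  obtain ⟨ht0, ht1⟩ := ht
  have h := Real.convexOn_mul_log.2 (x := a) (y := b) ha0 hb0
    (by linarith : (0:ℝ) ≤ 1 - t) ht0 (by ring)
  have h' := Real.convexOn_mul_log.2 (x := 1 - a) (y := 1 - b)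
    (by linarith : (0:ℝ) ≤ 1 - a) (by linarith : (0:ℝ) ≤ 1 - b)
    (by linarith : (0:ℝ) ≤ 1 - t) ht0 (by ring)
  simp only [smul_eq_mul] at h h'
  have e : 1 - ((1 - t) * a + t * b) = (1 - t) * (1 - a) + t * (1 - b) := by ring
  simp only [Gfun, e]
  calc ((1 - t) * a + t * b) * Real.log ((1 - t) * a + t * b)
        + ((1 - t) * (1 - a) + t * (1 - b)) * Real.log ((1 - t) * (1 - a) + t * (1 - b))
      ≤ ((1 - t) * (a * Real.log a) + t * (b * Real.log b))
        + ((1 - t) * ((1 - a) * Real.log (1 - a)) + t * ((1 - b) * Real.log (1 - b))) :=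
        add_le_add h h'
    _ = (1 - t) * (a * Real.log a + (1 - a) * Real.log (1 - a))
        + t * (b * Real.log b + (1 - b) * Real.log (1 - b)) := by ring

set_option maxHeartbeats 1000000 in
theorem minimizer_interior
    (N : ℕ) (hN : 1 ≤ N) (y : Fin N → ℝ) (hy : ∀ i, y i = 1 ∨ y i = -1)
    (K : Matrix (Fin N) (Fin N) ℝ) (hKsymm : K.IsSymm)
    (hKpsd : ∀ v : Fin N → ℝ, 0 ≤ ∑ i, ∑ j, v i * K i j * v j)
    (C : ℝ) (hC : 0 < C) (lam : ℝ)
    (f : (Fin N → ℝ) → ℝ)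
    (hf : ∀ α : Fin N → ℝ,
      f α = (1 / 2) * ∑ i, ∑ j, y i * y j * α i * α j * K i j
          + C * ∑ i, ((α i / C) * Real.log (α i / C)
              + (1 - α i / C) * Real.log (1 - α i / C))
          - lam * ∑ i, α i)
    (S : Set (Fin N → ℝ))
    (hS : S = {α : Fin N → ℝ | (∀ i, α i ∈ Set.Icc 0 C) ∧ ∑ i, α i * y i = 0})
    (hinterior : ∃ β ∈ S, ∀ i, β i ∈ Set.Ioo 0 C)
    (αstar : Fin N → ℝ) (hαS : αstar ∈ S)
    (hmin : ∀ β ∈ S, f αstar ≤ f β) :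
    ∀ i, 0 < αstar i ∧ αstar i < C := by
  intro i0
  by_contra hcon
  push_neg at hcon
  obtain ⟨β, hβS, hβint⟩ := hinterior
  rw [hS] at hαS hβS
  obtain ⟨hαbox, hαsum⟩ := hαS
  obtain ⟨hβbox, hβsum⟩ := hβS
  have hy1 : ∀ i, |y i| = 1 := fun i => by rcases hy i with h | h <;> simp [h]
  have hbound : αstar i0 = 0 ∨ αstar i0 = C := by
    obtain ⟨h0, h1⟩ := hαbox i0
    rcases eq_or_lt_of_le h0 with h | h
    · exact Or.inl h.symm
    · rcases eq_or_lt_of_le h1 with h' | h'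
      · exact Or.inr h'
      · exact absurd (hcon h) (not_le.mpr h')
  -- box membership as Icc 0 1 after dividing by C
  have hdiv : ∀ (γ : Fin N → ℝ), (∀ j, γ j ∈ Set.Icc 0 C) → ∀ j, γ j / C ∈ Set.Icc (0:ℝ) 1 :=
    fun γ hγ j => ⟨div_nonneg (hγ j).1 hC.le, (div_le_one hC).mpr (hγ j).2⟩
  -- the boundary coefficient c
  have hkey : ∃ c : ℝ, 0 < c ∧ c < 1 ∧ Gfun (αstar i0 / C) = 0 ∧
      ∀ t : ℝ, Gfun ((αstar i0 + t * (β i0 - αstar i0)) / C) = Gfun (t * c) := by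
    obtain ⟨hb0, hb1⟩ := hβint i0
    rcases hbound with h0 | h1
    · refine ⟨β i0 / C, div_pos hb0 hC, (div_lt_one hC).mpr hb1, ?_, fun t => ?_⟩
      · rw [h0, zero_div, Gfun_zero]
      · rw [h0]; congr 1; field_simp; ring
    · refine ⟨1 - β i0 / C, by
        have := (div_lt_one hC).mpr hb1; linarith, by
        have := div_pos hb0 hC; linarith, ?_, fun t => ?_⟩
      · rw [h1, div_self hC.ne', Gfun_one]
      · have e : (αstar i0 + t * (β i0 - αstar i0)) / C = 1 - t * (1 - β i0 / C) := by
          rw [h1]; field_simp; ring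
        rw [e, Gfun_symm]
  obtain ⟨c, hc0, hc1, hG0, hGeq⟩ := hkey
  -- constants
  set TK : ℝ := ∑ i, ∑ j, |K i j| with hTK
  set LG : ℝ := ∑ i, |Gfun (β i / C) - Gfun (αstar i / C)| with hLG
  set R : ℝ := C ^ 2 * TK + C * LG + |lam| * N * C with hR
  set t : ℝ := min 1 (Real.exp (-(R + 1) / (C * c)) / c) with htdef
  have ht0 : 0 < t := lt_min one_pos (div_pos (Real.exp_pos _) hc0)
  have ht1 : t ≤ 1 := min_le_left _ _
  have htc0 : 0 < t * c := mul_pos ht0 hc0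
  have htc1 : t * c ≤ 1 := mul_le_one₀ ht1 hc0.le hc1.le
  have hlog : Real.log (t * c) ≤ -(R + 1) / (C * c) := by
    have h1 : t * c ≤ Real.exp (-(R + 1) / (C * c)) :=
      (le_div_iff₀ hc0).mp (min_le_right _ _)
    calc Real.log (t * c) ≤ Real.log (Real.exp (-(R + 1) / (C * c))) :=
          Real.log_le_log htc0 h1
      _ = -(R + 1) / (C * c) := Real.log_exp _
  have hlogR : C * c * Real.log (t * c) ≤ -(R + 1) := by
    have hCc : (0:ℝ) < C * c := mul_pos hC hc0
    have := mul_le_mul_of_nonneg_left hlog hCc.le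
    rwa [mul_div_cancel₀ _ hCc.ne'] at this
  -- the perturbed point
  set γ : Fin N → ℝ := fun j => αstar j + t * (β j - αstar j) with hγdef
  have hγbox : ∀ j, γ j ∈ Set.Icc 0 C := by
    intro j
    obtain ⟨ha0, ha1⟩ := hαbox j
    obtain ⟨hb0, hb1⟩ := hβbox j
    constructor
    · have h1 : 0 ≤ (1 - t) * αstar j := mul_nonneg (by linarith) ha0
      have h2 : 0 ≤ t * β j := mul_nonneg ht0.le hb0
      simp only [hγdef]; nlinarith
    · have h1 : (1 - t) * αstar j ≤ (1 - t) * C := mul_le_mul_of_nonneg_left ha1 (by linarith)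
      have h2 : t * β j ≤ t * C := mul_le_mul_of_nonneg_left hb1 ht0.le
      simp only [hγdef]; nlinarith
  have hγS : γ ∈ S := by
    rw [hS]
    refine ⟨hγbox, ?_⟩
    have : ∑ j, γ j * y j = (1 - t) * ∑ j, αstar j * y j + t * ∑ j, β j * y j := by
      rw [Finset.mul_sum, Finset.mul_sum, ← Finset.sum_add_distrib]
      exact Finset.sum_congr rfl fun j _ => by simp only [hγdef]; ring
    rw [this, hαsum, hβsum]; ring
  -- abs bounds
  have habs_a : ∀ j, |αstar j| ≤ C := fun j =>
    abs_le.mpr ⟨by linarith [(hαbox j).1], (hαbox j).2⟩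
  have habs_g : ∀ j, |γ j| ≤ C := fun j =>
    abs_le.mpr ⟨by linarith [(hγbox j).1], (hγbox j).2⟩
  have habs_d : ∀ j, |γ j - αstar j| ≤ t * C := by
    intro j
    have e : γ j - αstar j = t * (β j - αstar j) := by simp only [hγdef]; ring
    have hbd : |β j - αstar j| ≤ C := by
      obtain ⟨ha0, ha1⟩ := hαbox j; obtain ⟨hb0, hb1⟩ := hβbox j
      exact abs_le.mpr ⟨by linarith, by linarith⟩
    rw [e, abs_mul, abs_of_pos ht0]
    exact mul_le_mul_of_nonneg_left hbd ht0.le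
  -- quadratic bound
  have hQ : ∑ i, ∑ j, y i * y j * γ i * γ j * K i j
      ≤ ∑ i, ∑ j, y i * y j * αstar i * αstar j * K i j + t * (2 * C ^ 2 * TK) := by
    have hterm : ∀ i j : Fin N, y i * y j * γ i * γ j * K i j
        ≤ y i * y j * αstar i * αstar j * K i j + t * (2 * C ^ 2 * |K i j|) := by
      intro i j
      set X : ℝ := (γ i - αstar i) * γ j + αstar i * (γ j - αstar j) with hX
      have e : y i * y j * γ i * γ j * K i j - y i * y j * αstar i * αstar j * K i j
          = y i * y j * K i j * X := by simp only [hX]; ring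
      have habsX : |X| ≤ 2 * t * C ^ 2 := by
        have b1 : |(γ i - αstar i) * γ j| ≤ t * C * C := by
          rw [abs_mul]
          exact mul_le_mul (habs_d i) (habs_g j) (abs_nonneg _) (by positivity)
        have b2 : |αstar i * (γ j - αstar j)| ≤ C * (t * C) := by
          rw [abs_mul]
          exact mul_le_mul (habs_a i) (habs_d j) (abs_nonneg _) hC.le
        calc |X| ≤ |(γ i - αstar i) * γ j| + |αstar i * (γ j - αstar j)| := abs_add_le _ _
          _ ≤ t * C * C + C * (t * C) := add_le_add b1 b2
          _ = 2 * t * C ^ 2 := by ring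
      have h1 : y i * y j * K i j * X ≤ |y i * y j * K i j * X| := le_abs_self _
      have h2 : |y i * y j * K i j * X| = |K i j| * |X| := by
        rw [abs_mul, abs_mul, abs_mul, hy1 i, hy1 j]; ring
      have h3 : |K i j| * |X| ≤ |K i j| * (2 * t * C ^ 2) :=
        mul_le_mul_of_nonneg_left habsX (abs_nonneg _)
      have : y i * y j * K i j * X ≤ t * (2 * C ^ 2 * |K i j|) := by
        calc y i * y j * K i j * X ≤ |K i j| * (2 * t * C ^ 2) := by
              rw [← h2] at h3; exact h1.trans h3
          _ = t * (2 * C ^ 2 * |K i j|) := by ring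
      linarith [e ▸ this]
    calc ∑ i, ∑ j, y i * y j * γ i * γ j * K i j
        ≤ ∑ i, ∑ j, (y i * y j * αstar i * αstar j * K i j + t * (2 * C ^ 2 * |K i j|)) :=
          Finset.sum_le_sum fun i _ => Finset.sum_le_sum fun j _ => hterm i j
      _ = ∑ i, ∑ j, y i * y j * αstar i * αstar j * K i j + t * (2 * C ^ 2 * TK) := by
          simp only [Finset.sum_add_distrib, hTK, Finset.mul_sum]
  -- entropy bound
  have hEsharp : Gfun (γ i0 / C) ≤ Gfun (αstar i0 / C) + t * c * Real.log (t * c) := by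
    have e : γ i0 / C = (αstar i0 + t * (β i0 - αstar i0)) / C := rfl
    rw [e, hGeq t, hG0]
    have := Gfun_le (x := t * c) ⟨htc0.le, htc1⟩
    linarith
  have hErest : ∀ i ∈ Finset.univ.erase i0,
      Gfun (γ i / C) ≤ Gfun (αstar i / C) + t * |Gfun (β i / C) - Gfun (αstar i / C)| := by
    intro i _
    have e : γ i / C = (1 - t) * (αstar i / C) + t * (β i / C) := by
      simp only [hγdef]; field_simp; ring
    have h1 := Gfun_combo (hdiv αstar hαbox i) (hdiv β (fun j => ⟨(hβbox j).1, (hβbox j).2⟩) i)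
      ⟨ht0.le, ht1⟩
    rw [← e] at h1
    have h2 : t * (Gfun (β i / C) - Gfun (αstar i / C))
        ≤ t * |Gfun (β i / C) - Gfun (αstar i / C)| :=
      mul_le_mul_of_nonneg_left (le_abs_self _) ht0.le
    nlinarith
  have hE : ∑ i, Gfun (γ i / C)
      ≤ ∑ i, Gfun (αstar i / C) + t * LG + t * c * Real.log (t * c) := by
    have e1 := Finset.add_sum_erase Finset.univ (fun i => Gfun (γ i / C)) (Finset.mem_univ i0)
    have e2 := Finset.add_sum_erase Finset.univ (fun i => Gfun (αstar i / C)) (Finset.mem_univ i0)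
    have h3 : ∑ i ∈ Finset.univ.erase i0, Gfun (γ i / C)
        ≤ ∑ i ∈ Finset.univ.erase i0,
            (Gfun (αstar i / C) + t * |Gfun (β i / C) - Gfun (αstar i / C)|) :=
      Finset.sum_le_sum hErest
    have h4 : ∑ i ∈ Finset.univ.erase i0,
          (Gfun (αstar i / C) + t * |Gfun (β i / C) - Gfun (αstar i / C)|)
        = ∑ i ∈ Finset.univ.erase i0, Gfun (αstar i / C)
          + ∑ i ∈ Finset.univ.erase i0, t * |Gfun (β i / C) - Gfun (αstar i / C)| :=
      Finset.sum_add_distrib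
    have h5 : ∑ i ∈ Finset.univ.erase i0, t * |Gfun (β i / C) - Gfun (αstar i / C)|
        ≤ t * LG := by
      rw [hLG, Finset.mul_sum]
      exact Finset.sum_le_sum_of_subset_of_nonneg (Finset.subset_univ _)
        (fun i _ _ => mul_nonneg ht0.le (abs_nonneg _))
    linarith [hEsharp]
  -- linear bound
  have hLin : -(lam * ∑ j, γ j) ≤ -(lam * ∑ j, αstar j) + t * (|lam| * N * C) := by
    set D : ℝ := ∑ j, (β j - αstar j) with hD
    have hsumγ : ∑ j, γ j = ∑ j, αstar j + t * D := by
      rw [hD, Finset.mul_sum, ← Finset.sum_add_distrib]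
    have hdabs : |D| ≤ N * C := by
      calc |D| ≤ ∑ j, |β j - αstar j| := Finset.abs_sum_le_sum_abs _ _
        _ ≤ ∑ _j : Fin N, C := Finset.sum_le_sum fun j _ => by
            obtain ⟨ha0, ha1⟩ := hαbox j; obtain ⟨hb0, hb1⟩ := hβbox j
            exact abs_le.mpr ⟨by linarith, by linarith⟩
        _ = N * C := by simp [Finset.sum_const, Finset.card_univ, nsmul_eq_mul]
    have h2 : -(lam * (t * D)) ≤ |lam| * (t * (N * C)) := by
      calc -(lam * (t * D)) ≤ |lam * (t * D)| := neg_le_abs _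
        _ = |lam| * (t * |D|) := by rw [abs_mul, abs_mul, abs_of_pos ht0]
        _ ≤ |lam| * (t * (N * C)) :=
            mul_le_mul_of_nonneg_left (mul_le_mul_of_nonneg_left hdabs ht0.le) (abs_nonneg _)
    have e : -(lam * (∑ j, αstar j + t * D)) = -(lam * ∑ j, αstar j) + -(lam * (t * D)) := by
      ring
    rw [hsumγ, e]
    linarith
  -- assemble
  have hfγ := hf γ
  have hfα := hf αstar
  have hEγ : (∑ i, ((γ i / C) * Real.log (γ i / C) + (1 - γ i / C) * Real.log (1 - γ i / C)))
      = ∑ i, Gfun (γ i / C) := by simp only [Gfun]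
  have hEα : (∑ i, ((αstar i / C) * Real.log (αstar i / C)
      + (1 - αstar i / C) * Real.log (1 - αstar i / C))) = ∑ i, Gfun (αstar i / C) := by
    simp only [Gfun]
  rw [hEγ] at hfγ
  rw [hEα] at hfα
  have hmul1 : C * (∑ i, Gfun (γ i / C))
      ≤ C * (∑ i, Gfun (αstar i / C) + t * LG + t * c * Real.log (t * c)) :=
    mul_le_mul_of_nonneg_left hE hC.le
  have hmul2 : t * (C * c * Real.log (t * c)) ≤ t * (-(R + 1)) :=
    mul_le_mul_of_nonneg_left hlogR ht0.le
  rw [hR] at hmul2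
  have hlt : f γ < f αstar := by
    rw [hfγ, hfα]
    linarith [hQ, hLin, hmul1, hmul2, ht0]
  exact absurd (hmin γ hγS) (not_le.mpr hlt)
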